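/- Define completed-trace formulas of uniform depth over a finite action set 𝒜 by: formulas of depth 0 are finite (possibly empty) disjunctions of the truth constant ⊤; formulas of depth n+1 are finite (possibly empty) disjunctions of formulas that are either the nullary modality ⋆ or of the form ◇σφ with σ ∈ 𝒜 and φ of depth n. For a state x of a finitely branching LTS γ: X → 𝒫ω(𝒜×X), let x ⊨ ⊤ always, x ⊨ ⋆ iff γ(x) = ∅, x ⊨ φ₁∨…∨φₖ iff x ⊨ φᵢ for some i, and x ⊨ ◇σφ iff there is y with (σ,y) ∈ γ(x) and y ⊨ φ. Then two states x, y of finitely branching LTSs are completed trace equivalent if and only if they satisfy exactly the same completed-trace formulas (of all uniform depths). -/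

import Mathlib

universe u v

/-- `Reaches γ x w z` : in the finitely branching LTS `γ`, there is a path from `x`
to `z` whose labels spell the word `w`. -/
inductive Reaches {A : Type u} {X : Type v} (γ : X → Finset (A × X)) : X → List A → X → Prop
  | nil (x : X) : Reaches γ x [] x
  | cons {x : X} {σ : A} {y : X} {w : List A} {z : X} :
      (σ, y) ∈ γ x → Reaches γ y w z → Reaches γ x (σ :: w) z

/-- The ready set `I(x)` of a state. -/
def readySet {A : Type u} {X : Type v} [DecidableEq A]
    (γ : X → Finset (A × X)) (x : X) : Finset A :=
  (γ x).image Prod.fst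

/-- The trace set of a state. -/
def traceSet {A : Type u} {X : Type v} (γ : X → Finset (A × X)) (x : X) : Set (List A) :=
  {w | ∃ z, Reaches γ x w z}

/-- The set of complete traces of a state. -/
def completeTraceSet {A : Type u} {X : Type v} [DecidableEq A]
    (γ : X → Finset (A × X)) (x : X) : Set (List A) :=
  {w | ∃ z, Reaches γ x w z ∧ readySet γ z = ∅}

/-- Completed-trace formulas of uniform depth: a depth-`0` formula is a finite
(possibly empty) disjunction of the truth constant `⊤`; a depth-`(n+1)` formula is a
finite (possibly empty) disjunction of formulas that are either the nullary modality
`⋆` (represented by `none`) or `◇σφ` with `φ` of depth `n` (represented by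
`some (σ, φ)`). -/
@[reducible] def CTFormula (A : Type u) : ℕ → Type u
  | 0 => List PUnit
  | n + 1 => List (Option (A × CTFormula A n))

/-- Satisfaction of completed-trace formulas. -/
def SatCT {A : Type u} {X : Type v} (γ : X → Finset (A × X)) :
    (n : ℕ) → X → CTFormula A n → Prop
  | 0, _, φ => ∃ u, u ∈ φ
  | n + 1, x, φ => ∃ d ∈ φ,
      match d with
      | none => γ x = ∅
      | some (σ, ψ) => ∃ q ∈ γ x, q.1 = σ ∧ SatCT γ n q.2 ψ

section Aux

variable {A : Type u} {X : Type v}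

theorem reaches_nil_iff (γ : X → Finset (A × X)) (x z : X) :
    Reaches γ x [] z ↔ z = x := by
  constructor
  · intro h; cases h; rfl
  · rintro rfl; exact .nil _

theorem reaches_cons_iff (γ : X → Finset (A × X)) (x : X) (σ : A) (w : List A) (z : X) :
    Reaches γ x (σ :: w) z ↔ ∃ y, (σ, y) ∈ γ x ∧ Reaches γ y w z := by
  constructor
  · intro h; cases h with | cons h1 h2 => exact ⟨_, h1, h2⟩
  · rintro ⟨y, h1, h2⟩; exact .cons h1 h2

theorem mem_traceSet_cons (γ : X → Finset (A × X)) (x : X) (σ : A) (w : List A) :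
    (σ :: w) ∈ traceSet γ x ↔ ∃ y, (σ, y) ∈ γ x ∧ w ∈ traceSet γ y := by
  simp only [traceSet, Set.mem_setOf_eq, reaches_cons_iff]
  tauto

theorem nil_mem_traceSet (γ : X → Finset (A × X)) (x : X) : [] ∈ traceSet γ x :=
  ⟨x, .nil x⟩

theorem mem_completeTraceSet_cons [DecidableEq A] (γ : X → Finset (A × X)) (x : X)
    (σ : A) (w : List A) :
    (σ :: w) ∈ completeTraceSet γ x ↔ ∃ y, (σ, y) ∈ γ x ∧ w ∈ completeTraceSet γ y := by
  simp only [completeTraceSet, Set.mem_setOf_eq, reaches_cons_iff]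
  tauto

theorem nil_mem_completeTraceSet [DecidableEq A] (γ : X → Finset (A × X)) (x : X) :
    [] ∈ completeTraceSet γ x ↔ γ x = ∅ := by
  simp only [completeTraceSet, Set.mem_setOf_eq, reaches_nil_iff, readySet]
  constructor
  · rintro ⟨z, rfl, h⟩; exact Finset.image_eq_empty.mp h
  · intro h; exact ⟨x, rfl, by simp [h]⟩

/-- "Trace branches" of a formula: words whose being a trace witnesses satisfaction
via a branch ending in `⊤`. -/
def tBr : (n : ℕ) → CTFormula A n → List (List A)
  | 0, φ => φ.map fun _ => []
  | n + 1, φ => φ.flatMap fun d => match d with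
      | none => []
      | some (σ, ψ) => (tBr n ψ).map (σ :: ·)

/-- "Complete branches" of a formula: words whose being a complete trace witnesses
satisfaction via a branch ending in `⋆`. -/
def cBr : (n : ℕ) → CTFormula A n → List (List A)
  | 0, _ => []
  | n + 1, φ => φ.flatMap fun d => match d with
      | none => [[]]
      | some (σ, ψ) => (cBr n ψ).map (σ :: ·)

theorem satCT_iff [DecidableEq A] (γ : X → Finset (A × X)) :
    ∀ (n : ℕ) (x : X) (φ : CTFormula A n),
      SatCT γ n x φ ↔
        (∃ w ∈ tBr n φ, w ∈ traceSet γ x) ∨ (∃ w ∈ cBr n φ, w ∈ completeTraceSet γ x)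
  | 0, x, φ => by
    simp only [SatCT, tBr, cBr, List.mem_map, List.not_mem_nil]
    constructor
    · rintro ⟨u, hu⟩
      exact Or.inl ⟨[], ⟨u, hu, rfl⟩, nil_mem_traceSet γ x⟩
    · rintro (⟨w, ⟨u, hu, rfl⟩, -⟩ | ⟨w, h, -⟩)
      · exact ⟨u, hu⟩
      · exact absurd h (by simp)
  | n + 1, x, φ => by
    simp only [SatCT, tBr, cBr, List.mem_flatMap]
    constructor
    · rintro ⟨d, hd, hsat⟩
      match d with
      | none =>
        exact Or.inr ⟨[], ⟨none, hd, by simp⟩, (nil_mem_completeTraceSet γ x).mpr hsat⟩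
      | some (σ, ψ) =>
        obtain ⟨⟨σ', y⟩, hq, rfl, hs⟩ := hsat
        rcases (satCT_iff γ n y ψ).mp hs with ⟨w, hw, ht⟩ | ⟨w, hw, hc⟩
        · exact Or.inl ⟨σ' :: w, ⟨some (σ', ψ), hd, by
            simp only [List.mem_map]; exact ⟨w, hw, rfl⟩⟩,
            (mem_traceSet_cons γ x σ' w).mpr ⟨y, hq, ht⟩⟩
        · exact Or.inr ⟨σ' :: w, ⟨some (σ', ψ), hd, by
            simp only [List.mem_map]; exact ⟨w, hw, rfl⟩⟩,
            (mem_completeTraceSet_cons γ x σ' w).mpr ⟨y, hq, hc⟩⟩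
    · rintro (⟨w, ⟨d, hd, hw⟩, ht⟩ | ⟨w, ⟨d, hd, hw⟩, hc⟩)
      · match d with
        | none => exact absurd hw (by simp)
        | some (σ, ψ) =>
          simp only [List.mem_map] at hw
          obtain ⟨w', hw', rfl⟩ := hw
          obtain ⟨y, hy, ht'⟩ := (mem_traceSet_cons γ x σ w').mp ht
          exact ⟨some (σ, ψ), hd, ⟨(σ, y), hy, rfl,
            (satCT_iff γ n y ψ).mpr (Or.inl ⟨w', hw', ht'⟩)⟩⟩
      · match d with
        | none =>
          simp only [List.mem_singleton] at hw
          subst hw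
          exact ⟨none, hd, (nil_mem_completeTraceSet γ x).mp hc⟩
        | some (σ, ψ) =>
          simp only [List.mem_map] at hw
          obtain ⟨w', hw', rfl⟩ := hw
          obtain ⟨y, hy, hc'⟩ := (mem_completeTraceSet_cons γ x σ w').mp hc
          exact ⟨some (σ, ψ), hd, ⟨(σ, y), hy, rfl,
            (satCT_iff γ n y ψ).mpr (Or.inr ⟨w', hw', hc'⟩)⟩⟩

/-- The formula expressing "`w` is a trace". -/
def trF : (w : List A) → CTFormula A w.length
  | [] => [PUnit.unit]
  | σ :: w => [some (σ, trF w)]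

/-- The formula expressing "`w` is a complete trace". -/
def ctF : (w : List A) → CTFormula A (w.length + 1)
  | [] => [none]
  | σ :: w => [some (σ, ctF w)]

theorem sat_trF [DecidableEq A] (γ : X → Finset (A × X)) :
    ∀ (w : List A) (x : X), SatCT γ w.length x (trF w) ↔ w ∈ traceSet γ x
  | [], x => by
    simp only [trF, SatCT]
    constructor
    · intro _; exact nil_mem_traceSet γ x
    · intro _; exact ⟨PUnit.unit, by simp⟩
  | σ :: w, x => by
    simp only [trF, SatCT, List.mem_singleton, mem_traceSet_cons]
    constructor
    · rintro ⟨d, hd, hsat⟩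
      obtain rfl := List.mem_singleton.mp hd
      obtain ⟨⟨σ', y⟩, hq, rfl, hs⟩ := hsat
      exact ⟨y, hq, (sat_trF γ w y).mp hs⟩
    · rintro ⟨y, hy, ht⟩
      exact ⟨some (σ, trF w), List.mem_singleton_self _, ⟨(σ, y), hy, rfl, (sat_trF γ w y).mpr ht⟩⟩

theorem sat_ctF [DecidableEq A] (γ : X → Finset (A × X)) :
    ∀ (w : List A) (x : X), SatCT γ (w.length + 1) x (ctF w) ↔ w ∈ completeTraceSet γ x
  | [], x => by
    simp only [ctF, SatCT, List.mem_singleton, nil_mem_completeTraceSet]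
    constructor
    · rintro ⟨d, rfl, h⟩; exact h
    · intro h; exact ⟨none, rfl, h⟩
  | σ :: w, x => by
    simp only [ctF, SatCT, List.mem_singleton, mem_completeTraceSet_cons]
    constructor
    · rintro ⟨d, rfl, ⟨⟨σ', y⟩, hq, rfl, hs⟩⟩
      exact ⟨y, hq, (sat_ctF γ w y).mp hs⟩
    · rintro ⟨y, hy, hc⟩
      exact ⟨some (σ, ctF w), rfl, ⟨(σ, y), hy, rfl, (sat_ctF γ w y).mpr hc⟩⟩

end Aux

/-- Two states of finitely branching LTSs are completed trace equivalent iff they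
satisfy exactly the same completed-trace formulas of all uniform depths. -/
theorem completed_trace_equiv_iff_same_formulas {A : Type u} [Fintype A] [DecidableEq A]
    {X Y : Type v} (γ : X → Finset (A × X)) (δ : Y → Finset (A × Y)) (x : X) (y : Y) :
    (traceSet γ x = traceSet δ y ∧ completeTraceSet γ x = completeTraceSet δ y) ↔
      ∀ (n : ℕ) (φ : CTFormula A n), (SatCT γ n x φ ↔ SatCT δ n y φ) := by
  constructor
  · rintro ⟨ht, hc⟩ n φ
    rw [satCT_iff, satCT_iff, ht, hc]
  · intro h
    constructor
    · ext w
      rw [← sat_trF γ w x, ← sat_trF δ w y]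
      exact h w.length (trF w)
    · ext w
      rw [← sat_ctF γ w x, ← sat_ctF δ w y]
      exact h (w.length + 1) (ctF w)
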